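/- arXiv:1311.0160 — 3 statements merged into one kernel-verified Lean document; each statement's English description precedes it below -/
import Mathlib

section
/- With Y_v = X_v μ(C_v) where C_v is the cylinder of the finite word v, for every finite word w and every level l ≥ |w|, the sum over words v of length l extending w of E(Y_v | F_{|w|}) equals Y_w almost surely. -/
open MeasureTheory ProbabilityTheory

/-- The product of the weights along the prefixes of the word `v`. -/
noncomputable def cascadeX {m : ℕ} {Ω : Type*} (W : List (Fin m) → Ω → ℝ)
    (v : List (Fin m)) (ω : Ω) : ℝ :=
  ∏ l ∈ Finset.range v.length, W (v.take (l + 1)) ω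

/-- The σ-algebra `F_k` generated by the weights indexed by words of length at most `k`. -/
def cascadeF {m : ℕ} {Ω : Type*} [MeasurableSpace Ω] (W : List (Fin m) → Ω → ℝ)
    (k : ℕ) : MeasurableSpace Ω :=
  ⨆ (i : List (Fin m)) (_ : i.length ≤ k), MeasurableSpace.comap (W i) inferInstance

/-- The cylinder `C_v` of the finite word `v`: all infinite words extending `v`. -/
def cyl {m : ℕ} (v : List (Fin m)) : Set (ℕ → Fin m) :=
  {j | ∀ l, ∀ h : l < v.length, j l = v.get ⟨l, h⟩}

/-- `Y_v = X_v μ(C_v)`. -/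
noncomputable def cascadeY {m : ℕ} {Ω : Type*} (W : List (Fin m) → Ω → ℝ)
    (μ : Measure (ℕ → Fin m)) (v : List (Fin m)) (ω : Ω) : ℝ :=
  cascadeX W v ω * (μ (cyl v)).toReal

section aux

variable {m : ℕ} {Ω : Type*} [MeasurableSpace Ω] {P : Measure Ω} [IsProbabilityMeasure P]
  {W : List (Fin m) → Ω → ℝ}

/-- Products of distinct weights are integrable with integral 1. -/
lemma prodW_aux (hWmeas : ∀ v, Measurable (W v)) (hWint : ∀ v, Integrable (W v) P)
    (hWmean : ∀ v, ∫ ω, W v ω ∂P = 1) (hindep : iIndepFun W P)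
    (s : Finset (List (Fin m))) :
    Integrable (∏ i ∈ s, W i) P ∧ ∫ ω, (∏ i ∈ s, W i) ω ∂P = 1 := by
  classical
  induction s using Finset.induction with
  | empty => simp; exact integrable_const (1 : ℝ)
  | @insert a s ha ih =>
    have hInd : IndepFun (∏ j ∈ s, W j) (W a) P :=
      hindep.indepFun_finsetProd_of_notMem hWmeas ha
    have hint : Integrable (∏ i ∈ insert a s, W i) P := by
      rw [Finset.prod_insert ha, mul_comm]
      exact hInd.integrable_mul ih.1 (hWint a)
    refine ⟨hint, ?_⟩
    have : ∫ ω, (∏ i ∈ insert a s, W i) ω ∂P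
        = ∫ ω, ((∏ j ∈ s, W j) * W a) ω ∂P := by
      rw [Finset.prod_insert ha, mul_comm]
    rw [this, hInd.integral_mul_eq_mul_integral ih.1.aestronglyMeasurable (hWint a).aestronglyMeasurable, ih.2, hWmean a, one_mul]

lemma cascadeX_eq_prodW (W : List (Fin m) → Ω → ℝ) (v : List (Fin m)) :
    cascadeX W v = ∏ i ∈ (Finset.range v.length).image (fun l => v.take (l + 1)), W i := by
  funext ω
  rw [Finset.prod_apply, Finset.prod_image]
  · rfl
  · intro a ha b hb hab
    simp only [Finset.mem_coe, Finset.mem_range] at ha hb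
    have := congrArg List.length hab
    simp only [List.length_take] at this
    omega

lemma measurableSet_cyl (v : List (Fin m)) : MeasurableSet (cyl v) := by
  have : cyl v = ⋂ l : Fin v.length, (fun j : ℕ → Fin m => j l) ⁻¹' {v.get l} := by
    ext j
    simp only [cyl, Set.mem_setOf_eq, Set.mem_iInter, Set.mem_preimage,
      Set.mem_singleton_iff]
    exact ⟨fun h l => h l l.isLt, fun h l hl => h ⟨l, hl⟩⟩
  rw [this]
  exact MeasurableSet.iInter fun l => measurable_pi_apply _ (measurableSet_singleton _)

lemma cyl_eq_iUnion (w : List (Fin m)) (n : ℕ) :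
    cyl w = ⋃ f : Fin n → Fin m, cyl (w ++ List.ofFn f) := by
  ext j
  constructor
  · intro hj
    refine Set.mem_iUnion.mpr ⟨fun i => j (w.length + i), fun l hl => ?_⟩
    have hlen : (w ++ List.ofFn fun i : Fin n => j (w.length + ↑i)).length = w.length + n := by
      simp
    rcases lt_or_ge l w.length with h | h
    · show j l = _
      rw [List.get_eq_getElem]
      rw [List.getElem_append_left h]
      exact hj l h
    · show j l = _
      rw [List.get_eq_getElem]
      rw [List.getElem_append_right h]
      rw [List.getElem_ofFn]
      show j l = j (w.length + (l - w.length))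
      congr 1
      omega
  · intro hj
    rcases Set.mem_iUnion.mp hj with ⟨f, hf⟩
    intro l hl
    have hl' : l < (w ++ List.ofFn f).length := by simp; omega
    have := hf l hl'
    rw [List.get_eq_getElem, List.getElem_append_left hl] at this
    exact this

lemma cyl_disjoint (w : List (Fin m)) (n : ℕ) :
    Pairwise (Function.onFun Disjoint fun f : Fin n → Fin m => cyl (w ++ List.ofFn f)) := by
  intro f g hfg
  rw [Function.onFun]
  rw [Set.disjoint_left]
  intro j hjf hjg
  obtain ⟨i, hi⟩ := Function.ne_iff.mp hfg
  have hlen : ∀ h : Fin n → Fin m, (w ++ List.ofFn h).length = w.length + n := by simp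
  have hlt : w.length + (i : ℕ) < w.length + n := by omega
  have h1 := hjf (w.length + i) (by rw [hlen]; exact hlt)
  have h2 := hjg (w.length + i) (by rw [hlen]; exact hlt)
  rw [List.get_eq_getElem, List.getElem_append_right (Nat.le_add_right _ _),
    List.getElem_ofFn] at h1 h2
  simp only [Nat.add_sub_cancel_left, Fin.eta] at h1 h2
  exact hi (h1.symm.trans h2)

lemma sum_mu_cyl (μ : Measure (ℕ → Fin m)) (w : List (Fin m)) (n : ℕ) :
    ∑ f : Fin n → Fin m, μ (cyl (w ++ List.ofFn f)) = μ (cyl w) := by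
  rw [cyl_eq_iUnion w n,
    measure_iUnion (cyl_disjoint w n) fun f => measurableSet_cyl _, tsum_fintype]

lemma cascadeX_append (W : List (Fin m) → Ω → ℝ) (w u : List (Fin m)) (ω : Ω) :
    cascadeX W (w ++ u) ω =
      cascadeX W w ω *
        ∏ j ∈ Finset.range u.length, W ((w ++ u).take (w.length + j + 1)) ω := by
  unfold cascadeX
  rw [List.length_append, Finset.prod_range_add]
  congr 1
  refine Finset.prod_congr rfl fun l hl => ?_
  rw [Finset.mem_range] at hl
  rw [List.take_append_of_le_length (by omega)]


/-- The conditional expectation of `Y_{w ++ u}` given `F_{|w|}` is `μ(C_{w++u}) X_w`. -/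
lemma condexp_cascadeY (hWmeas : ∀ v, Measurable (W v)) (hWint : ∀ v, Integrable (W v) P)
    (hWmean : ∀ v, ∫ ω, W v ω ∂P = 1) (hindep : iIndepFun W P)
    (μ : Measure (ℕ → Fin m)) (w u : List (Fin m)) :
    P[cascadeY W μ (w ++ u)|cascadeF W w.length]
      =ᵐ[P] fun ω => (μ (cyl (w ++ u))).toReal * cascadeX W w ω := by
  classical
  have hFle : cascadeF W w.length ≤ ‹MeasurableSpace Ω› :=
    iSup₂_le fun i _ => (hWmeas i).comap_le
  haveI : SigmaFinite (P.trim hFle) := by infer_instance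
  have hWF : ∀ i : List (Fin m), i.length ≤ w.length → Measurable[cascadeF W w.length] (W i) := by
    intro i hi
    exact measurable_iff_comap_le.mpr
      (le_iSup₂ (f := fun (i : List (Fin m)) (_ : i.length ≤ w.length) =>
        MeasurableSpace.comap (W i) inferInstance) i hi)
  have hXwsm : StronglyMeasurable[cascadeF W w.length] (cascadeX W w) := by
    apply Measurable.stronglyMeasurable
    apply Finset.measurable_prod
    intro i hi
    rw [Finset.mem_range] at hi
    exact hWF _ (by rw [List.length_take]; omega)
  have hGle : (⨆ (i : List (Fin m)) (_ : w.length < i.length),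
      MeasurableSpace.comap (W i) inferInstance) ≤ ‹MeasurableSpace Ω› :=
    iSup₂_le fun i _ => (hWmeas i).comap_le
  have hWG : ∀ i : List (Fin m), w.length < i.length →
      Measurable[⨆ (i : List (Fin m)) (_ : w.length < i.length),
        MeasurableSpace.comap (W i) inferInstance] (W i) := by
    intro i hi
    exact measurable_iff_comap_le.mpr
      (le_iSup₂ (f := fun (i : List (Fin m)) (_ : w.length < i.length) =>
        MeasurableSpace.comap (W i) inferInstance) i hi)
  have hIndep : Indep (⨆ (i : List (Fin m)) (_ : w.length < i.length),
      MeasurableSpace.comap (W i) inferInstance) (cascadeF W w.length) P := by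
    have := indep_iSup_of_disjoint (m := fun i : List (Fin m) =>
        MeasurableSpace.comap (W i) inferInstance)
      (fun i => (hWmeas i).comap_le) hindep
      (S := {i : List (Fin m) | w.length < i.length})
      (T := {i : List (Fin m) | i.length ≤ w.length})
      (by rw [Set.disjoint_left]; intro i hi hi'; simp only [Set.mem_setOf_eq] at hi hi'; omega)
    exact this
  set v : List (Fin m) := w ++ u with hv
  set c : ℝ := (μ (cyl v)).toReal with hc
  set Z : Ω → ℝ := fun ω => ∏ j ∈ Finset.range u.length,
    W (v.take (w.length + j + 1)) ω with hZ
  have hYv : cascadeY W μ v = c • cascadeX W v := by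
    funext ω; simp [cascadeY, smul_eq_mul, mul_comm, hc]
  have hXv : cascadeX W v = cascadeX W w * Z := by
    funext ω; exact cascadeX_append W w u ω
  set t : Finset (List (Fin m)) :=
    (Finset.range u.length).image (fun j => v.take (w.length + j + 1)) with ht
  have hlen_take : ∀ j, j < u.length → (v.take (w.length + j + 1)).length
      = w.length + j + 1 := by
    intro j hj
    simp only [hv, List.length_take, List.length_append]
    omega
  have hZt : Z = ∏ i ∈ t, W i := by
    funext ω
    rw [hZ, Finset.prod_apply, ht, Finset.prod_image]
    intro a ha b hb hab
    rw [Finset.mem_coe, Finset.mem_range] at ha hb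
    have := congrArg List.length hab
    rw [hlen_take a ha, hlen_take b hb] at this
    omega
  have hZint : Integrable Z P := by
    rw [hZt]; exact (prodW_aux hWmeas hWint hWmean hindep t).1
  have hZmean : ∫ ω, Z ω ∂P = 1 := by
    rw [hZt]
    exact (prodW_aux hWmeas hWint hWmean hindep t).2
  have hZG : StronglyMeasurable[⨆ (i : List (Fin m)) (_ : w.length < i.length),
      MeasurableSpace.comap (W i) inferInstance] Z := by
    apply Measurable.stronglyMeasurable
    apply Finset.measurable_prod
    intro j hj
    rw [Finset.mem_range] at hj
    exact hWG _ (by rw [hlen_take j hj]; omega)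
  have hXvint : Integrable (cascadeX W w * Z) P := by
    rw [← hXv, cascadeX_eq_prodW]
    exact (prodW_aux hWmeas hWint hWmean hindep _).1
  have h1 : P[Z|cascadeF W w.length] =ᵐ[P] fun _ => (1 : ℝ) := by
    have := condExp_indep_eq (μ := P) hGle hFle hZG hIndep
    refine this.trans ?_
    filter_upwards with ω
    simp [hZmean]
  have h2 : P[cascadeX W w * Z|cascadeF W w.length]
      =ᵐ[P] cascadeX W w * P[Z|cascadeF W w.length] :=
    condExp_mul_of_stronglyMeasurable_left hXwsm hXvint hZint
  have h3 : P[cascadeY W μ v|cascadeF W w.length]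
      =ᵐ[P] c • P[cascadeX W v|cascadeF W w.length] := by
    rw [hYv]; exact condExp_smul c (cascadeX W v) _
  rw [hXv] at h3
  filter_upwards [h3, h2, h1] with ω e3 e2 e1
  rw [e3]
  simp only [Pi.smul_apply, smul_eq_mul]
  rw [e2]
  simp only [Pi.mul_apply]
  rw [e1]
  ring

end aux

/-- With `Y_v = X_v μ(C_v)`, for every finite word `w` and every level `l ≥ |w|`,
`∑_{|v|=l, v ⪰ w} E(Y_v | F_{|w|}) = Y_w` almost surely. -/
theorem stmt_5 {m : ℕ} (hm : 2 ≤ m) {Ω : Type*} [MeasurableSpace Ω]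
    (P : Measure Ω) [IsProbabilityMeasure P]
    (W : List (Fin m) → Ω → ℝ)
    (hWmeas : ∀ v, Measurable (W v))
    (hWpos : ∀ v ω, 0 < W v ω)
    (hWint : ∀ v, Integrable (W v) P)
    (hWmean : ∀ v, ∫ ω, W v ω ∂P = 1)
    (hindep : iIndepFun W P)
    (μ : Measure (ℕ → Fin m)) [IsProbabilityMeasure μ]
    (w : List (Fin m)) (l : ℕ) (hl : w.length ≤ l) :
    ∀ᵐ ω ∂P,
      ∑ f : Fin (l - w.length) → Fin m,
        (P[cascadeY W μ (w ++ List.ofFn f)|cascadeF W w.length]) ω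
      = cascadeY W μ w ω := by
  classical
  set n := l - w.length with hn
  have key : ∀ f : Fin n → Fin m,
      P[cascadeY W μ (w ++ List.ofFn f)|cascadeF W w.length]
        =ᵐ[P] fun ω => (μ (cyl (w ++ List.ofFn f))).toReal * cascadeX W w ω :=
    fun f => condexp_cascadeY hWmeas hWint hWmean hindep μ w (List.ofFn f)
  have hmu : ∑ f : Fin n → Fin m, (μ (cyl (w ++ List.ofFn f))).toReal
      = (μ (cyl w)).toReal := by
    rw [← ENNReal.toReal_sum (fun f _ => measure_ne_top μ _), sum_mu_cyl]
  filter_upwards [ae_all_iff.mpr key] with ω hω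
  calc ∑ f : Fin n → Fin m, (P[cascadeY W μ (w ++ List.ofFn f)|cascadeF W w.length]) ω
      = ∑ f : Fin n → Fin m, (μ (cyl (w ++ List.ofFn f))).toReal * cascadeX W w ω :=
        Finset.sum_congr rfl fun f _ => hω f
    _ = (∑ f : Fin n → Fin m, (μ (cyl (w ++ List.ofFn f))).toReal) * cascadeX W w ω := by
        rw [Finset.sum_mul]
    _ = (μ (cyl w)).toReal * cascadeX W w ω := by rw [hmu]
    _ = cascadeY W μ w ω := by rw [cascadeY, mul_comm]
end

section
/- In the multiplicative cascade setup with Y_v = X_v μ(C_v), if the sequence μ_k(I_∞) = Σ_{|i|=k} Y_i is L^q-bounded for some q > 1, then limsup_{k→∞} (Σ_{|i|=k} E(Y_i^q))^{1/k} ≤ 1. -/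
open MeasureTheory ProbabilityTheory

open Filter ENNReal in
/-- If `μ_k(I_∞) = ∑_{|i|=k} Y_i` is `L^q`-bounded for some `q > 1`, then
`limsup_k (∑_{|i|=k} E(Y_i^q))^{1/k} ≤ 1`. -/
theorem stmt_6 {m : ℕ} (hm : 2 ≤ m) {Ω : Type*} [MeasurableSpace Ω]
    (P : Measure Ω) [IsProbabilityMeasure P]
    (W : List (Fin m) → Ω → ℝ)
    (hWmeas : ∀ v, Measurable (W v))
    (hWpos : ∀ v ω, 0 < W v ω)
    (hWint : ∀ v, Integrable (W v) P)
    (hWmean : ∀ v, ∫ ω, W v ω ∂P = 1)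
    (hindep : iIndepFun W P)
    (μ : Measure (ℕ → Fin m)) [IsProbabilityMeasure μ]
    (q : ℝ) (hq : 1 < q)
    (hbdd : ∃ C : ℝ≥0∞, C < ⊤ ∧ ∀ k : ℕ,
      ∫⁻ ω, ENNReal.ofReal ((∑ f : Fin k → Fin m, cascadeY W μ (List.ofFn f) ω) ^ q) ∂P ≤ C) :
    Filter.limsup
      (fun k : ℕ =>
        (∑ f : Fin k → Fin m,
            ∫⁻ ω, ENNReal.ofReal (cascadeY W μ (List.ofFn f) ω ^ q) ∂P) ^ (1 / (k : ℝ)))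
      Filter.atTop ≤ 1 := by
  obtain ⟨C, hCtop, hC⟩ := hbdd
  set D : ℝ≥0∞ := max C 1 with hD
  have hDtop : D ≠ ⊤ := by
    simp [hD, hCtop.ne]
  have hD1 : (1:ℝ≥0∞) ≤ D := le_max_right _ _
  have hD0 : D ≠ 0 := by
    intro h; rw [h] at hD1; simp at hD1
  -- nonnegativity of Y
  have hYnn : ∀ v ω, 0 ≤ cascadeY W μ v ω := by
    intro v ω
    exact mul_nonneg (Finset.prod_nonneg fun l _ => (hWpos _ ω).le) ENNReal.toReal_nonneg
  have hYmeas : ∀ v, Measurable (cascadeY W μ v) := by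
    intro v
    exact (Finset.measurable_prod _ fun l _ => hWmeas _).mul_const _
  -- key bound: S_k ≤ D
  have hS : ∀ k : ℕ,
      (∑ f : Fin k → Fin m,
        ∫⁻ ω, ENNReal.ofReal (cascadeY W μ (List.ofFn f) ω ^ q) ∂P) ≤ D := by
    intro k
    have hmeas : ∀ f : Fin k → Fin m,
        Measurable fun ω => ENNReal.ofReal (cascadeY W μ (List.ofFn f) ω ^ q) :=
      fun f => (((Real.continuous_rpow_const (by linarith : (0:ℝ) ≤ q)).measurable.comp
        (hYmeas _))).ennreal_ofReal
    rw [← MeasureTheory.lintegral_finset_sum _ fun f _ => hmeas f]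
    refine le_trans ?_ ((hC k).trans (le_max_left _ _))
    refine lintegral_mono fun ω => ?_
    rw [← ENNReal.ofReal_sum_of_nonneg (fun f _ => Real.rpow_nonneg (hYnn _ ω) q)]
    refine ENNReal.ofReal_le_ofReal ?_
    -- ∑ a_i ^ q ≤ (∑ a_i) ^ q
    set a : (Fin k → Fin m) → ℝ := fun f => cascadeY W μ (List.ofFn f) ω with ha
    have han : ∀ f, 0 ≤ a f := fun f => hYnn _ ω
    have hsn : 0 ≤ ∑ f, a f := Finset.sum_nonneg fun f _ => han f
    calc ∑ f, a f ^ q ≤ ∑ f, (∑ g, a g) ^ (q - 1) * a f := by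
          refine Finset.sum_le_sum fun f _ => ?_
          have h1 : a f ^ (q - 1) * a f ^ (1:ℝ) = a f ^ q := by
            rw [← Real.rpow_add' (han f) (by intro h0; nlinarith)]
            norm_num
          rw [← h1, Real.rpow_one]
          have h2 : a f ^ (q - 1) ≤ (∑ g, a g) ^ (q - 1) :=
            Real.rpow_le_rpow (han f)
              (Finset.single_le_sum (fun g _ => han g) (Finset.mem_univ f))
              (by linarith)
          exact mul_le_mul_of_nonneg_right h2 (han f)
      _ = (∑ g, a g) ^ (q - 1) * ∑ f, a f := by rw [← Finset.mul_sum]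
      _ = (∑ f, a f) ^ q := by
          have h1 : (∑ f, a f) ^ (q - 1) * (∑ f, a f) ^ (1:ℝ) = (∑ f, a f) ^ q := by
            rw [← Real.rpow_add' hsn (by intro h0; nlinarith)]
            norm_num
          rw [← h1, Real.rpow_one]
  -- now the limsup bound
  have hmono : ∀ k : ℕ,
      (∑ f : Fin k → Fin m,
        ∫⁻ ω, ENNReal.ofReal (cascadeY W μ (List.ofFn f) ω ^ q) ∂P) ^ (1 / (k:ℝ))
        ≤ D ^ (1 / (k:ℝ)) := by
    intro k
    exact ENNReal.rpow_le_rpow (hS k) (by positivity)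
  have hlim : Filter.Tendsto (fun k : ℕ => D ^ (1 / (k:ℝ))) Filter.atTop (nhds 1) := by
    have hDr : 0 < D.toReal := ENNReal.toReal_pos hD0 hDtop
    have h1 : Filter.Tendsto (fun k : ℕ => (1 / (k:ℝ))) Filter.atTop (nhds 0) :=
      tendsto_one_div_atTop_nhds_zero_nat
    have h2 : Filter.Tendsto (fun k : ℕ => D.toReal ^ (1 / (k:ℝ))) Filter.atTop
        (nhds 1) := by
      have := (Real.continuousAt_const_rpow (a := D.toReal) (b := 0) hDr.ne').tendsto.comp h1
      simpa [Function.comp_def] using this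
    have h3 : Filter.Tendsto (fun k : ℕ => ENNReal.ofReal (D.toReal ^ (1 / (k:ℝ))))
        Filter.atTop (nhds 1) := by
      have := (ENNReal.continuous_ofReal.tendsto 1).comp h2
      simpa [Function.comp_def] using this
    refine h3.congr fun k => ?_
    rw [← ENNReal.ofReal_rpow_of_pos hDr, ENNReal.ofReal_toReal hDtop]
  calc Filter.limsup _ Filter.atTop
      ≤ Filter.limsup (fun k : ℕ => D ^ (1 / (k:ℝ))) Filter.atTop :=
        Filter.limsup_le_limsup (Filter.Eventually.of_forall hmono)
    _ = 1 := hlim.limsup_eq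
end

section
/- Fix n ≥ 1 and 0 < λ < 1. Then Σ over all 0 ≤ l₁ ≤ ⋯ ≤ l_{n−1} ≤ k of N(l₁,…,l_{n−1}) λ^{l₁+⋯+l_{n−1}} is bounded above by (n−1)! Σ_{r=0}^∞ (r+1)^{n−2} λ^r, a finite bound independent of k. -/
/-- The length of the longest common prefix of two leaves (depth-`k` words). -/
def meetLen {m k : ℕ} (i j : Fin k → Fin m) : ℕ :=
  (Finset.univ.filter fun t : Fin k => ∀ s ≤ t, i s = j s).card

/-- The number of distinct length-`l` prefixes among the leaves of the tuple `J`. -/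
def prefixCount {m k n : ℕ} (J : Fin n → Fin k → Fin m) (l : ℕ) : ℕ :=
  (Finset.univ.image fun r : Fin n => (List.ofFn (J r)).take l).card

/-- The multiplicity of level `l` in the multiset of join levels of the tuple `J`:
the pairwise meets of the leaves of `J`, counted with multiplicity (a vertex where `r+1`
branches of the spanning subtree separate counts `r` times, and a leaf repeated `r+1`
times counts `r` times). -/
def joinMult {m k n : ℕ} (J : Fin n → Fin k → Fin m) (l : ℕ) : ℕ :=
  if l < k then prefixCount J (l + 1) - prefixCount J l
  else if l = k then n - prefixCount J k
  else 0

/-- A bijection of the leaves of the depth-`k` `m`-ary tree preserving all meets;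
these are exactly the restrictions to leaves of automorphisms of the rooted tree. -/
def IsLeafAut {m k : ℕ} (g : (Fin k → Fin m) → (Fin k → Fin m)) : Prop :=
  Function.Bijective g ∧ ∀ i j, meetLen (g i) (g j) = meetLen i j

/-- The (leaf map of an) automorphism fixes the vertex `v` iff it maps leaves
below `v` to leaves below `v`. -/
def FixesVertex {m k : ℕ} (g : (Fin k → Fin m) → (Fin k → Fin m)) (v : List (Fin m)) : Prop :=
  ∀ i : Fin k → Fin m, v <+: List.ofFn i → v <+: List.ofFn (g i)

/-- The orbit of an `n`-tuple of leaves under the automorphisms of the depth-`k`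
tree fixing the vertex `v`. -/
def orbitV {m k n : ℕ} (v : List (Fin m)) (J : Fin n → Fin k → Fin m) :
    Set (Fin n → Fin k → Fin m) :=
  {I | ∃ g, IsLeafAut g ∧ FixesVertex g v ∧ ∀ r, g (J r) = I r}

/-- The vertex set of the minimal subtree rooted at `v` containing the leaves of `J`. -/
def spanningTree {m k n : ℕ} (v : List (Fin m)) (J : Fin n → Fin k → Fin m) :
    Set (List (Fin m)) :=
  {w | v <+: w ∧ ∃ r, w <+: List.ofFn (J r)}

/-- `p` is the deepest prefix of the leaf `j` lying in the minimal subtree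
`T_v(J)`, i.e. `j ∧ T_v(J) = p`. -/
def meetsTreeAt {m k n : ℕ} (v : List (Fin m)) (J : Fin n → Fin k → Fin m)
    (j : Fin k → Fin m) (p : List (Fin m)) : Prop :=
  p ∈ spanningTree v J ∧ p <+: List.ofFn j ∧
    ∀ w ∈ spanningTree v J, w <+: List.ofFn j → w.length ≤ p.length

/-- The vertices of the minimal rooted subtree containing the leaves of `J`,
as a finset (all prefixes of the leaves of `J` extending `v`). -/
def treeFinset {m k n : ℕ} (v : List (Fin m)) (J : Fin n → Fin k → Fin m) :
    Finset (List (Fin m)) :=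
  (Finset.univ.image fun rl : Fin n × Fin (k + 1) =>
    (List.ofFn (J rl.1)).take rl.2).filter fun w => v <+: w

/-- The orbit of a marked tuple `(J; q₀)` (an `n`-tuple of leaves together with a vertex
of its spanning subtree) under the automorphisms of the depth-`k` tree fixing `v`;
the action on the mark is the one induced by the action on the leaves. -/
def orbitVMarked {m k n : ℕ} (v : List (Fin m)) (J : Fin n → Fin k → Fin m)
    (q₀ : List (Fin m)) : Set ((Fin n → Fin k → Fin m) × List (Fin m)) :=
  {Ip | ∃ g, IsLeafAut g ∧ FixesVertex g v ∧ (∀ r, g (J r) = Ip.1 r) ∧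
    ∀ r, q₀ <+: List.ofFn (J r) → Ip.2 = (List.ofFn (Ip.1 r)).take q₀.length}

/-- The number of root-fixing-automorphism classes of `n`-tuples of leaves of the depth-`k`
`m`-ary tree with join levels `l₁ ≤ ⋯ ≤ l_{n−1}`. -/
noncomputable def numClasses (m k n : ℕ) (l : Fin (n - 1) → ℕ) : ℕ :=
  Set.ncard {C : Set (Fin n → Fin k → Fin m) |
    ∃ J : Fin n → Fin k → Fin m, C = orbitV ([] : List (Fin m)) J ∧
      ∀ a : ℕ, joinMult J a = (Finset.univ.filter fun t : Fin (n - 1) => l t = a).card}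

lemma meetLen_le {m k : ℕ} (i j : Fin k → Fin m) : meetLen i j ≤ k := by
  classical
  calc (Finset.univ.filter fun t : Fin k => ∀ s ≤ t, i s = j s).card
      ≤ (Finset.univ : Finset (Fin k)).card := Finset.card_filter_le _ _
    _ = k := by simp

lemma card_filter_val_lt {k v : ℕ} (hv : v ≤ k) :
    (Finset.univ.filter fun t : Fin k => (t : ℕ) < v).card = v := by
  classical
  have : (Finset.univ.filter fun t : Fin k => (t : ℕ) < v)
      = Finset.univ.map (Fin.castLEEmb hv) := by
    ext t
    simp only [Finset.mem_filter, Finset.mem_univ, true_and, Finset.mem_map]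
    constructor
    · intro ht
      exact ⟨⟨(t:ℕ), ht⟩, by ext; simp⟩
    · rintro ⟨s, -, rfl⟩
      simpa using s.isLt
  rw [this, Finset.card_map, Finset.card_univ, Fintype.card_fin]

lemma meetLen_ge_iff {m k : ℕ} {i j : Fin k → Fin m} {v : ℕ} (hv : v ≤ k) :
    v ≤ meetLen i j ↔ ∀ s : Fin k, (s : ℕ) < v → i s = j s := by
  classical
  constructor
  · intro h
    by_contra hc
    push_neg at hc
    have hne : (Finset.univ.filter fun s : Fin k => (s : ℕ) < v ∧ i s ≠ j s).Nonempty := by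
      obtain ⟨s, hs1, hs2⟩ := hc
      exact ⟨s, by simp [hs1, hs2]⟩
    set s₀ := Finset.min' _ hne with hs₀
    have hs₀mem := Finset.min'_mem _ hne
    simp only [Finset.mem_filter, Finset.mem_univ, true_and] at hs₀mem
    have hsub : (Finset.univ.filter fun t : Fin k => ∀ s ≤ t, i s = j s)
        ⊆ Finset.univ.filter fun t : Fin k => (t : ℕ) < (s₀ : ℕ) := by
      intro t ht
      simp only [Finset.mem_filter, Finset.mem_univ, true_and] at ht ⊢
      by_contra hlt
      push_neg at hlt
      exact hs₀mem.2 (ht s₀ (by exact_mod_cast hlt))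
    have := Finset.card_le_card hsub
    rw [card_filter_val_lt (le_of_lt s₀.isLt)] at this
    · exact absurd (le_trans h this) (by omega)
  · intro h
    have hsub : (Finset.univ.filter fun t : Fin k => (t : ℕ) < v)
        ⊆ Finset.univ.filter fun t : Fin k => ∀ s ≤ t, i s = j s := by
      intro t ht
      simp only [Finset.mem_filter, Finset.mem_univ, true_and] at ht ⊢
      intro s hs
      exact h s (lt_of_le_of_lt (by exact_mod_cast hs) ht)
    have := Finset.card_le_card hsub
    rwa [card_filter_val_lt hv] at this

lemma meetLen_comm {m k : ℕ} (i j : Fin k → Fin m) : meetLen i j = meetLen j i := by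
  unfold meetLen
  congr 1
  apply Finset.filter_congr
  intro t _
  constructor <;> intro h s hs <;> exact (h s hs).symm

lemma meetLen_self {m k : ℕ} (i : Fin k → Fin m) : meetLen i i = k := by
  unfold meetLen
  simp

lemma meetLen_ultra {m k : ℕ} (i j l : Fin k → Fin m) :
    min (meetLen i j) (meetLen j l) ≤ meetLen i l := by
  have h1 : min (meetLen i j) (meetLen j l) ≤ k := le_trans (min_le_left _ _) (meetLen_le _ _)
  rw [meetLen_ge_iff h1]
  intro s hs
  have hij := (meetLen_ge_iff (meetLen_le i j)).mp le_rfl s (lt_of_lt_of_le hs (min_le_left _ _))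
  have hjl := (meetLen_ge_iff (meetLen_le j l)).mp le_rfl s (lt_of_lt_of_le hs (min_le_right _ _))
  exact hij.trans hjl

lemma take_eq_iff_meetLen {m k : ℕ} {i j : Fin k → Fin m} {v : ℕ} (hv : v ≤ k) :
    (List.ofFn i).take v = (List.ofFn j).take v ↔ v ≤ meetLen i j := by
  rw [meetLen_ge_iff hv]
  constructor
  · intro h s hs
    have h1 : (s:ℕ) < ((List.ofFn i).take v).length := by
      simp only [List.length_take, List.length_ofFn]; omega
    have h2 := List.getElem_of_eq h h1
    simpa [List.getElem_take, List.getElem_ofFn] using h2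
  · intro h
    apply List.ext_getElem
    · simp [hv]
    · intro t h1 h2
      simp only [List.length_take, List.length_ofFn, lt_min_iff] at h1
      simp only [List.getElem_take, List.getElem_ofFn]
      exact h ⟨t, h1.2⟩ h1.1


lemma exists_injective_extend {α : Type*} [Fintype α] [DecidableEq α]
    (f : α → α) (s : Finset α) (hf : Set.InjOn f ↑s) :
    ∃ g : α → α, Function.Injective g ∧ ∀ x ∈ s, g x = f x := by
  classical
  set t := s.image f with ht
  have hcard : t.card = s.card := Finset.card_image_of_injOn hf
  have hcc : (sᶜ : Finset α).card = (tᶜ : Finset α).card := by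
    rw [Finset.card_compl, Finset.card_compl, hcard]
  let e := Finset.equivOfCardEq hcc
  refine ⟨fun x => if h : x ∈ s then f x else (e ⟨x, by simpa using h⟩ : α), ?_, ?_⟩
  · intro x y hxy
    by_cases hx : x ∈ s <;> by_cases hy : y ∈ s <;> simp only [hx, hy, dif_pos, dif_neg,
      not_false_iff] at hxy
    · exact hf hx hy hxy
    · exfalso
      have h1 : f x ∈ t := Finset.mem_image_of_mem f hx
      have h2 := Finset.mem_compl.mp (e ⟨y, by simpa using hy⟩).2
      rw [← hxy] at h2
      exact h2 h1
    · exfalso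
      have h1 : f y ∈ t := Finset.mem_image_of_mem f hy
      have h2 := Finset.mem_compl.mp (e ⟨x, by simpa using hx⟩).2
      rw [hxy] at h2
      exact h2 h1
    · have : (⟨x, by simpa using hx⟩ : (sᶜ : Finset α)) = ⟨y, by simpa using hy⟩ :=
        e.injective (Subtype.ext hxy)
      exact congrArg Subtype.val this
  · intro x hx
    simp [hx]

section Portrait
variable {m k n : ℕ} {I J : Fin n → Fin k → Fin m}

lemma node_perm (hM : ∀ r s, meetLen (I r) (I s) = meetLen (J r) (J s))
    (w : List (Fin m)) (ht : w.length < k) :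
    ∃ σ : Fin m → Fin m, Function.Injective σ ∧
      ∀ r : Fin n, (List.ofFn (J r)).take w.length = w →
        σ (J r ⟨w.length, ht⟩) = I r ⟨w.length, ht⟩ := by
  classical
  set t := w.length with htw
  set tf : Fin k := ⟨t, ht⟩ with htf
  have key : ∀ r r' : Fin n, (List.ofFn (J r)).take t = w → (List.ofFn (J r')).take t = w →
      (J r tf = J r' tf ↔ I r tf = I r' tf) := by
    intro r r' hr hr'
    have htake : (List.ofFn (J r)).take t = (List.ofFn (J r')).take t := hr.trans hr'.symm
    have hmJ : t ≤ meetLen (J r) (J r') := (take_eq_iff_meetLen (le_of_lt ht)).mp htake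
    have hagreeJ := (meetLen_ge_iff (le_of_lt ht)).mp hmJ
    have hmI : t ≤ meetLen (I r) (I r') := (hM r r') ▸ hmJ
    have hagreeI := (meetLen_ge_iff (le_of_lt ht)).mp hmI
    constructor
    · intro hv
      have h1 : t + 1 ≤ meetLen (J r) (J r') := by
        rw [meetLen_ge_iff ht]
        intro s hs
        rcases Nat.lt_or_ge (s : ℕ) t with h | h
        · exact hagreeJ s h
        · have : s = tf := Fin.ext (show (s:ℕ) = t by omega)
          rw [this]; exact hv
      have h2 : t + 1 ≤ meetLen (I r) (I r') := (hM r r') ▸ h1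
      exact (meetLen_ge_iff ht).mp h2 tf (Nat.lt_succ_self t)
    · intro hv
      have h1 : t + 1 ≤ meetLen (I r) (I r') := by
        rw [meetLen_ge_iff ht]
        intro s hs
        rcases Nat.lt_or_ge (s : ℕ) t with h | h
        · exact hagreeI s h
        · have : s = tf := Fin.ext (show (s:ℕ) = t by omega)
          rw [this]; exact hv
      have h2 : t + 1 ≤ meetLen (J r) (J r') := (hM r r') ▸ h1
      exact (meetLen_ge_iff ht).mp h2 tf (Nat.lt_succ_self t)
  set P : Fin m → Prop := fun c => ∃ r : Fin n, (List.ofFn (J r)).take t = w ∧ J r tf = c with hP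
  set f : Fin m → Fin m := fun c =>
    if h : P c then I h.choose tf else c with hfdef
  have hfval : ∀ r : Fin n, (List.ofFn (J r)).take t = w → f (J r tf) = I r tf := by
    intro r hr
    have hPc : P (J r tf) := ⟨r, hr, rfl⟩
    have hch := hPc.choose_spec
    rw [hfdef]
    simp only [dif_pos hPc]
    exact ((key _ _ hch.1 hr).mp hch.2)
  have hinjOn : Set.InjOn f ↑(Finset.univ.filter P) := by
    intro c hc c' hc' hcc
    simp only [Finset.coe_filter, Set.mem_setOf_eq, Finset.mem_univ, true_and] at hc hc'
    obtain ⟨r, hr, rfl⟩ := hc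
    obtain ⟨r', hr', rfl⟩ := hc'
    rw [hfval r hr, hfval r' hr'] at hcc
    exact (key r r' hr hr').mpr hcc
  obtain ⟨σ, hσinj, hσext⟩ := exists_injective_extend f (Finset.univ.filter P) hinjOn
  refine ⟨σ, hσinj, ?_⟩
  intro r hr
  have hr2 : (List.ofFn (J r)).take t = w := hr
  have hmem : J r tf ∈ Finset.univ.filter P := by
    simp only [Finset.mem_filter, Finset.mem_univ, true_and]
    exact ⟨r, hr2, rfl⟩
  rw [hσext _ hmem]
  exact hfval r hr2

end Portrait

lemma exists_aut {m k n : ℕ} {I J : Fin n → Fin k → Fin m}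
    (hM : ∀ r s, meetLen (I r) (I s) = meetLen (J r) (J s)) :
    ∃ g, IsLeafAut g ∧ ∀ r, g (J r) = I r := by
  classical
  choose σ hσinj hσval using node_perm hM
  set σ' : List (Fin m) → Fin m → Fin m :=
    fun w => if h : w.length < k then σ w h else id with hσ'def
  have hσ'inj : ∀ w, Function.Injective (σ' w) := by
    intro w
    show Function.Injective (if h : w.length < k then σ w h else id)
    split
    · exact hσinj _ _
    · exact fun a b h => h
  have hσ'val : ∀ (w : List (Fin m)) (ht : w.length < k) (r : Fin n),
      (List.ofFn (J r)).take w.length = w →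
      σ' w (J r ⟨w.length, ht⟩) = I r ⟨w.length, ht⟩ := by
    intro w ht r hr
    rw [hσ'def]
    simp only [dif_pos ht]
    exact hσval w ht r hr
  set g : (Fin k → Fin m) → Fin k → Fin m :=
    fun x t => σ' ((List.ofFn x).take (t : ℕ)) (x t) with hgdef
  have hlen : ∀ (x : Fin k → Fin m) (t : Fin k), ((List.ofFn x).take (t:ℕ)).length = (t:ℕ) := by
    intro x t
    simp only [List.length_take, List.length_ofFn]
    omega
  have hAg : ∀ v, v ≤ k → ∀ x y : Fin k → Fin m,
      ((∀ s : Fin k, (s:ℕ) < v → x s = y s) ↔ (∀ s : Fin k, (s:ℕ) < v → g x s = g y s)) := by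
    intro v
    induction v with
    | zero => intro _ x y; constructor <;> intro _ s hs <;> omega
    | succ v ih =>
      intro hv x y
      have hv' : v ≤ k := Nat.le_of_succ_le hv
      have htake : ∀ s : Fin k, (∀ s' : Fin k, (s':ℕ) < (s:ℕ) → x s' = y s') →
          (List.ofFn x).take (s:ℕ) = (List.ofFn y).take (s:ℕ) := by
        intro s hs
        rw [take_eq_iff_meetLen (le_of_lt s.isLt), meetLen_ge_iff (le_of_lt s.isLt)]
        exact hs
      constructor
      · intro h s hs
        have ht := htake s (fun s' hs' => h s' (by omega))
        rw [hgdef]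
        simp only
        rw [ht, h s hs]
      · intro h s hs
        have hbelow : ∀ s' : Fin k, (s':ℕ) < (s:ℕ) → x s' = y s' := by
          intro s' hs'
          exact (ih hv' x y).mpr (fun u hu => h u (by omega)) s' (by omega)
        have ht := htake s hbelow
        have hgs := h s hs
        rw [hgdef] at hgs
        simp only at hgs
        rw [ht] at hgs
        exact hσ'inj _ hgs
  have hmeet : ∀ x y, meetLen (g x) (g y) = meetLen x y := by
    intro x y
    unfold meetLen
    congr 1
    apply Finset.filter_congr
    intro t _
    have hiff := hAg ((t:ℕ)+1) t.isLt x y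
    constructor
    · intro h s hs
      exact hiff.mpr (fun u hu => h u (by rw [Fin.le_def]; omega)) s
        (by have := Fin.le_def.mp hs; omega)
    · intro h s hs
      exact hiff.mp (fun u hu => h u (by rw [Fin.le_def]; omega)) s
        (by have := Fin.le_def.mp hs; omega)
  have hginj : Function.Injective g := by
    intro x y hxy
    funext s
    exact (hAg k le_rfl x y).mpr (fun u hu => by rw [hxy]) s s.isLt
  have hgbij : Function.Bijective g := Finite.injective_iff_bijective.mp hginj
  refine ⟨g, ⟨hgbij, hmeet⟩, ?_⟩
  intro r
  funext t
  set w : List (Fin m) := (List.ofFn (J r)).take (t:ℕ) with hw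
  have hwl : w.length = (t:ℕ) := hlen _ _
  have hwlt : w.length < k := by rw [hwl]; exact t.isLt
  have hval := hσ'val w hwlt r (by rw [hwl])
  have htf : (⟨w.length, hwlt⟩ : Fin k) = t := Fin.ext hwl
  rw [htf] at hval
  exact hval



lemma orbit_subset {m k n : ℕ} {I J : Fin n → Fin k → Fin m}
    (hM : ∀ r s, meetLen (I r) (I s) = meetLen (J r) (J s)) :
    orbitV ([] : List (Fin m)) J ⊆ orbitV ([] : List (Fin m)) I := by
  intro x hx
  obtain ⟨h, ⟨hhbij, hhmeet⟩, -, hhval⟩ := hx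
  obtain ⟨g, ⟨hgbij, hgmeet⟩, hgval⟩ := exists_aut hM
  set e := Equiv.ofBijective g hgbij with he
  refine ⟨h ∘ e.symm, ⟨hhbij.comp e.symm.bijective, ?_⟩, fun i _ => List.nil_prefix, ?_⟩
  · intro i j
    show meetLen (h (e.symm i)) (h (e.symm j)) = meetLen i j
    rw [hhmeet]
    have h1 : g (e.symm i) = i := e.apply_symm_apply i
    have h2 : g (e.symm j) = j := e.apply_symm_apply j
    conv_rhs => rw [← h1, ← h2]
    rw [hgmeet]
  · intro r
    show h (e.symm (I r)) = x r
    rw [← hgval r]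
    have : e.symm (g (J r)) = J r := e.symm_apply_apply (J r)
    rw [this]
    exact hhval r

lemma orbit_eq {m k n : ℕ} {I J : Fin n → Fin k → Fin m}
    (hM : ∀ r s, meetLen (I r) (I s) = meetLen (J r) (J s)) :
    orbitV ([] : List (Fin m)) J = orbitV ([] : List (Fin m)) I :=
  Set.Subset.antisymm (orbit_subset hM)
    (orbit_subset (fun r s => (hM r s).symm))

section Encode
variable {m k n : ℕ}

noncomputable def aJ (J : Fin n → Fin k → Fin m) (s : Fin n) : ℕ :=
  (Finset.univ.filter fun r : Fin n => r < s).sup fun r => meetLen (J r) (J s)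

noncomputable def rhoJ (J : Fin n → Fin k → Fin m) (s : Fin n) : Fin n :=
  if h : (Finset.univ.filter fun r : Fin n => r < s).Nonempty then
    (Finset.exists_mem_eq_sup _ h fun r => meetLen (J r) (J s)).choose
  else s

lemma aJ_le_k (J : Fin n → Fin k → Fin m) (s : Fin n) : aJ J s ≤ k :=
  Finset.sup_le fun r _ => meetLen_le _ _

lemma aJ_zero (J : Fin n → Fin k → Fin m) {s : Fin n} (h : (s:ℕ) = 0) : aJ J s = 0 := by
  unfold aJ
  have : (Finset.univ.filter fun r : Fin n => r < s) = ∅ := by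
    apply Finset.eq_empty_of_forall_notMem
    intro r hr
    simp only [Finset.mem_filter, Finset.mem_univ, true_and, Fin.lt_def] at hr
    omega
  rw [this, Finset.sup_empty]
  rfl

lemma le_aJ (J : Fin n → Fin k → Fin m) {p s : Fin n} (h : p < s) :
    meetLen (J p) (J s) ≤ aJ J s :=
  Finset.le_sup (f := fun r => meetLen (J r) (J s)) (by simp [h])

lemma rhoJ_spec (J : Fin n → Fin k → Fin m) {s : Fin n} (h : 0 < (s:ℕ)) :
    rhoJ J s < s ∧ meetLen (J (rhoJ J s)) (J s) = aJ J s := by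
  have hne : (Finset.univ.filter fun r : Fin n => r < s).Nonempty := by
    refine ⟨⟨0, lt_of_le_of_lt (Nat.zero_le _) s.isLt⟩, ?_⟩
    simp only [Finset.mem_filter, Finset.mem_univ, true_and, Fin.lt_def]
    exact h
  unfold rhoJ
  rw [dif_pos hne]
  set ex := Finset.exists_mem_eq_sup (Finset.univ.filter fun r : Fin n => r < s) hne
    (fun r => meetLen (J r) (J s)) with hex
  obtain ⟨hmem, heq⟩ := ex.choose_spec
  exact ⟨(Finset.mem_filter.mp hmem).2, heq.symm⟩

lemma rhoJ_zero (J : Fin n → Fin k → Fin m) {s : Fin n} (h : (s:ℕ) = 0) : rhoJ J s = s := by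
  unfold rhoJ
  rw [dif_neg]
  intro ⟨r, hr⟩
  simp only [Finset.mem_filter, Finset.mem_univ, true_and, Fin.lt_def] at hr
  omega

lemma form_lemma (J : Fin n → Fin k → Fin m) {p s : Fin n} (hps : p < s)
    (hne : p ≠ rhoJ J s) :
    meetLen (J p) (J s) = min (aJ J s) (meetLen (J p) (J (rhoJ J s))) := by
  have h0 : 0 < (s:ℕ) := lt_of_le_of_lt (Nat.zero_le _) (Fin.lt_def.mp hps)
  obtain ⟨hρlt, hρval⟩ := rhoJ_spec J h0
  set ρ := rhoJ J s
  have hle : meetLen (J p) (J s) ≤ aJ J s := le_aJ J hps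
  have hu1 : min (meetLen (J p) (J ρ)) (meetLen (J ρ) (J s)) ≤ meetLen (J p) (J s) :=
    meetLen_ultra _ _ _
  have hu2 : min (meetLen (J p) (J s)) (meetLen (J s) (J ρ)) ≤ meetLen (J p) (J ρ) :=
    meetLen_ultra _ _ _
  have hcomm : meetLen (J s) (J ρ) = meetLen (J ρ) (J s) := meetLen_comm _ _
  omega

lemma recon {I J : Fin n → Fin k → Fin m} (ha : ∀ s, aJ I s = aJ J s)
    (hρ : ∀ s, rhoJ I s = rhoJ J s) :
    ∀ p q, meetLen (I p) (I q) = meetLen (J p) (J q) := by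
  suffices H : ∀ N (p q : Fin n), (p:ℕ) < N → (q:ℕ) < N →
      meetLen (I p) (I q) = meetLen (J p) (J q) by
    exact fun p q => H (max (p:ℕ) (q:ℕ) + 1) p q (by omega) (by omega)
  intro N
  induction N with
  | zero => intro p q hp hq; omega
  | succ N ih =>
    have claim : ∀ p q : Fin n, (p:ℕ) < (q:ℕ) → (q:ℕ) = N →
        meetLen (I p) (I q) = meetLen (J p) (J q) := by
      intro p q hpq hqN
      have h0 : 0 < (q:ℕ) := by omega
      obtain ⟨hρltI, hρvalI⟩ := rhoJ_spec I h0
      obtain ⟨hρltJ, hρvalJ⟩ := rhoJ_spec J h0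
      by_cases hpρ : p = rhoJ J q
      · have hI : meetLen (I p) (I q) = aJ I q := by
          rw [hpρ, ← hρ q] at *
          exact hρvalI
        have hJ : meetLen (J p) (J q) = aJ J q := by rw [hpρ]; exact hρvalJ
        rw [hI, hJ, ha]
      · have hfI : meetLen (I p) (I q) =
            min (aJ I q) (meetLen (I p) (I (rhoJ I q))) :=
          form_lemma I (Fin.lt_def.mpr hpq) (by rw [hρ q]; exact hpρ)
        have hfJ : meetLen (J p) (J q) =
            min (aJ J q) (meetLen (J p) (J (rhoJ J q))) :=
          form_lemma J (Fin.lt_def.mpr hpq) hpρ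
        have hρN : ((rhoJ J q : Fin n) : ℕ) < N := by
          have := Fin.lt_def.mp hρltJ
          omega
        have hih : meetLen (I p) (I (rhoJ J q)) = meetLen (J p) (J (rhoJ J q)) :=
          ih p (rhoJ J q) (by omega) hρN
        rw [hfI, hfJ, ha, hρ, hih]
    intro p q hp hq
    by_cases hpq : p = q
    · subst hpq; rw [meetLen_self, meetLen_self]
    · have hpqv : (p:ℕ) ≠ (q:ℕ) := fun h => hpq (Fin.ext h)
      rcases Nat.lt_or_ge (p:ℕ) N with h1 | h1
      · rcases Nat.lt_or_ge (q:ℕ) N with h2 | h2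
        · exact ih p q h1 h2
        · exact claim p q (by omega) (by omega)
      · have h2 : (q:ℕ) < N := by omega
        rw [meetLen_comm (I p), meetLen_comm (J p)]
        exact claim q p (by omega) (by omega)

end Encode



section Counting
variable {m k n : ℕ}

open Finset

lemma card_image_firstocc {β : Type*} [DecidableEq β] (f : Fin n → β) :
    (Finset.univ.image f).card = (Finset.univ.filter fun s : Fin n => ∀ r < s, f r ≠ f s).card := by
  classical
  have himg : (Finset.univ.filter fun s : Fin n => ∀ r < s, f r ≠ f s).image f
      = Finset.univ.image f := by
    apply Finset.Subset.antisymm (Finset.image_subset_image (Finset.filter_subset _ _))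
    intro b hb
    obtain ⟨s, -, rfl⟩ := Finset.mem_image.mp hb
    have hne : (Finset.univ.filter fun r : Fin n => f r = f s).Nonempty := ⟨s, by simp⟩
    set s₀ := Finset.min' _ hne with hs₀
    have hmem := Finset.min'_mem _ hne
    simp only [Finset.mem_filter, Finset.mem_univ, true_and] at hmem
    apply Finset.mem_image.mpr
    refine ⟨s₀, ?_, hmem⟩
    simp only [Finset.mem_filter, Finset.mem_univ, true_and]
    intro r hr hfr
    have : s₀ ≤ r := Finset.min'_le _ r (by simp [hfr.trans hmem])
    exact absurd hr (not_lt.mpr this)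
  have hinj : Set.InjOn f ↑(Finset.univ.filter fun s : Fin n => ∀ r < s, f r ≠ f s) := by
    intro a ha b hb hab
    simp only [Finset.coe_filter, Set.mem_setOf_eq, Finset.mem_univ, true_and] at ha hb
    rcases lt_trichotomy a b with h | h | h
    · exact absurd hab (hb a h)
    · exact h
    · exact absurd hab.symm (ha b h)
  rw [← himg, Finset.card_image_of_injOn hinj]

lemma prefixCount_eq (J : Fin n → Fin k → Fin m) {v : ℕ} (hv : v ≤ k) :
    prefixCount J v
      = (Finset.univ.filter fun s : Fin n => (s:ℕ) = 0 ∨ aJ J s < v).card := by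
  classical
  rw [prefixCount, card_image_firstocc]
  congr 1
  apply Finset.filter_congr
  intro s _
  have step : ∀ r : Fin n, ((List.ofFn (J r)).take v ≠ (List.ofFn (J s)).take v
      ↔ meetLen (J r) (J s) < v) := by
    intro r
    rw [not_iff_comm, take_eq_iff_meetLen hv, not_lt]
  constructor
  · intro h
    rcases Nat.eq_zero_or_pos (s:ℕ) with h0 | h0
    · exact Or.inl h0
    · right
      rcases Nat.eq_zero_or_pos v with hv0 | hv0
      · exfalso
        have hr : (⟨0, lt_of_le_of_lt (Nat.zero_le _) s.isLt⟩ : Fin n) < s := by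
          rw [Fin.lt_def]; exact h0
        have := (step _).mp (h _ hr)
        omega
      · rw [aJ, Finset.sup_lt_iff (show ⊥ < v from hv0)]
        intro r hr
        simp only [Finset.mem_filter, Finset.mem_univ, true_and] at hr
        exact (step r).mp (h r hr)
  · intro h r hr
    rcases h with h0 | h
    · exact absurd (Fin.lt_def.mp hr) (by omega)
    · exact (step r).mpr (lt_of_le_of_lt (le_aJ J hr) h)

lemma joinMult_eq_count (J : Fin n → Fin k → Fin m) (hn : 0 < n) (v : ℕ) :
    joinMult J v = (Finset.univ.filter fun s : Fin n => 0 < (s:ℕ) ∧ aJ J s = v).card := by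
  classical
  set e : ℕ → ℕ := fun w => (Finset.univ.filter fun s : Fin n => 0 < (s:ℕ) ∧ aJ J s < w).card
    with he
  set f : ℕ → ℕ := fun w => (Finset.univ.filter fun s : Fin n => 0 < (s:ℕ) ∧ aJ J s = w).card
    with hf
  have hef : ∀ w, e (w + 1) = e w + f w := by
    intro w
    rw [he, hf]
    simp only
    rw [← Finset.card_union_of_disjoint]
    · congr 1
      ext s
      simp only [Finset.mem_union, Finset.mem_filter, Finset.mem_univ, true_and]
      constructor
      · rintro ⟨h1, h2⟩
        rcases Nat.lt_or_ge (aJ J s) w with h | h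
        · exact Or.inl ⟨h1, h⟩
        · exact Or.inr ⟨h1, by omega⟩
      · rintro (⟨h1, h2⟩ | ⟨h1, h2⟩) <;> exact ⟨h1, by omega⟩
    · rw [Finset.disjoint_filter]
      rintro s - ⟨-, h1⟩ ⟨-, h2⟩
      omega
  have hpc : ∀ w ≤ k, prefixCount J w = 1 + e w := by
    intro w hw
    rw [prefixCount_eq J hw]
    have hsplit : (Finset.univ.filter fun s : Fin n => (s:ℕ) = 0 ∨ aJ J s < w)
        = (Finset.univ.filter fun s : Fin n => (s:ℕ) = 0)
          ∪ (Finset.univ.filter fun s : Fin n => 0 < (s:ℕ) ∧ aJ J s < w) := by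
      ext s
      simp only [Finset.mem_union, Finset.mem_filter, Finset.mem_univ, true_and]
      constructor
      · rintro (h | h)
        · exact Or.inl h
        · rcases Nat.eq_zero_or_pos (s:ℕ) with h0 | h0
          · exact Or.inl h0
          · exact Or.inr ⟨h0, h⟩
      · rintro (h | ⟨h1, h2⟩)
        · exact Or.inl h
        · exact Or.inr h2
    rw [hsplit, Finset.card_union_of_disjoint]
    · congr 1
      have hzero : (Finset.univ.filter fun s : Fin n => (s:ℕ) = 0) = {⟨0, hn⟩} := by
        ext s
        simp [Fin.ext_iff]
      rw [hzero, Finset.card_singleton]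
    · rw [Finset.disjoint_filter]
      rintro s - h1 ⟨h2, -⟩
      omega
  have hek : e (k + 1) = n - 1 := by
    rw [he]
    simp only
    have h1 : (Finset.univ.filter fun s : Fin n => 0 < (s:ℕ) ∧ aJ J s < k + 1)
        = Finset.univ.filter fun s : Fin n => 0 < (s:ℕ) := by
      apply Finset.filter_congr
      intro s _
      have := aJ_le_k J s
      constructor
      · exact fun h => h.1
      · exact fun h => ⟨h, by omega⟩
    have h2 : (Finset.univ.filter fun s : Fin n => 0 < (s:ℕ))
        = Finset.univ.erase ⟨0, hn⟩ := by
      ext s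
      simp only [Finset.mem_filter, Finset.mem_univ, true_and, Finset.mem_erase, and_true,
        ne_eq, Fin.ext_iff]
      omega
    rw [h1, h2, Finset.card_erase_of_mem (Finset.mem_univ _), Finset.card_univ,
      Fintype.card_fin]
  have hvk : ∀ v > k, f v = 0 := by
    intro v hv
    rw [hf]
    simp only
    rw [Finset.card_eq_zero]
    apply Finset.eq_empty_of_forall_notMem
    intro s hs
    simp only [Finset.mem_filter, Finset.mem_univ, true_and] at hs
    have := aJ_le_k J s
    omega
  show joinMult J v = f v
  unfold joinMult
  split_ifs with h1 h2
  · rw [hpc (v+1) h1, hpc v (by omega)]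
    have := hef v
    omega
  · subst h2
    rw [hpc v le_rfl]
    have h3 := hef v
    omega
  · have := hvk v (by omega)
    omega

end Counting


open Classical in
noncomputable def Efin (n k : ℕ) (l : Fin (n - 1) → Fin (k + 1)) :
    Finset ((Fin n → Fin n) × (Fin n → Fin (k + 1))) :=
  Finset.univ.filter fun ρa =>
    (∀ s : Fin n, ((s:ℕ) = 0 → ρa.1 s = s) ∧ (0 < (s:ℕ) → (ρa.1 s : ℕ) < (s:ℕ)))
    ∧ (∀ s : Fin n, (s:ℕ) = 0 → (ρa.2 s : ℕ) = 0)
    ∧ ((Finset.univ.filter fun s : Fin n => 0 < (s:ℕ)).val.map fun s => ((ρa.2 s : ℕ)))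
        = (Finset.univ.val.map fun t : Fin (n - 1) => ((l t : ℕ)))

lemma count_map_finset {α : Type*} (s : Finset α) (f : α → ℕ) (v : ℕ) :
    Multiset.count v (s.val.map f) = (s.filter fun x => f x = v).card := by
  classical
  rw [Multiset.count_map]
  show _ = Multiset.card (Multiset.filter (fun x => f x = v) s.val)
  congr 1
  apply Multiset.filter_congr
  intro x _
  exact eq_comm

noncomputable def encA {m k n : ℕ} (J : Fin n → Fin k → Fin m) : Fin n → Fin (k + 1) :=
  fun s => ⟨aJ J s, Nat.lt_succ_of_le (aJ_le_k J s)⟩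

lemma enc_mem {m k n : ℕ} (hn : 0 < n) (J : Fin n → Fin k → Fin m)
    (l : Fin (n - 1) → Fin (k + 1))
    (hJ : ∀ a : ℕ, joinMult J a
      = (Finset.univ.filter fun t : Fin (n - 1) => (l t : ℕ) = a).card) :
    (rhoJ J, encA J) ∈ Efin n k l := by
  classical
  simp only [Efin, Finset.mem_filter, Finset.mem_univ, true_and]
  refine ⟨?_, ?_, ?_⟩
  · intro s
    exact ⟨fun h0 => rhoJ_zero J h0, fun h0 => Fin.lt_def.mp (rhoJ_spec J h0).1⟩
  · intro s h0
    exact aJ_zero J h0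
  · apply Multiset.ext.mpr
    intro v
    rw [count_map_finset, count_map_finset]
    have h1 : ((Finset.univ.filter fun s : Fin n => 0 < (s:ℕ)).filter
          fun s => ((encA J s : ℕ)) = v)
        = Finset.univ.filter fun s : Fin n => 0 < (s:ℕ) ∧ aJ J s = v := by
      rw [Finset.filter_filter]
      ext s
      rw [Finset.mem_filter, Finset.mem_filter]
      simp [encA]
    rw [h1, ← joinMult_eq_count J hn v, hJ v]

lemma sum_eq_of_mem_Efin {n k : ℕ} {l : Fin (n - 1) → Fin (k + 1)}
    {x : (Fin n → Fin n) × (Fin n → Fin (k + 1))}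
    (hx : x ∈ Efin n k l) : ∑ s : Fin n, (x.2 s : ℕ) = ∑ t, (l t : ℕ) := by
  classical
  simp only [Efin, Finset.mem_filter, Finset.mem_univ, true_and] at hx
  obtain ⟨-, h0, hms⟩ := hx
  have h1 : ∑ s : Fin n, ((x.2 s : ℕ))
      = ∑ s ∈ Finset.univ.filter (fun s : Fin n => 0 < (s:ℕ)), ((x.2 s : ℕ)) := by
    rw [← Finset.sum_filter_add_sum_filter_not Finset.univ (fun s : Fin n => 0 < (s:ℕ))
      (fun s => ((x.2 s : ℕ)))]
    have hz : ∑ s ∈ Finset.univ.filter (fun s : Fin n => ¬ 0 < (s:ℕ)), ((x.2 s : ℕ)) = 0 := by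
      apply Finset.sum_eq_zero
      intro s hs
      simp only [Finset.mem_filter, Finset.mem_univ, true_and, not_lt] at hs
      exact h0 s (by omega)
    rw [hz, add_zero]
  rw [h1]
  have h2 : ∑ s ∈ Finset.univ.filter (fun s : Fin n => 0 < (s:ℕ)), ((x.2 s : ℕ))
      = ((Finset.univ.filter fun s : Fin n => 0 < (s:ℕ)).val.map
          fun s => ((x.2 s : ℕ))).sum := rfl
  have h3 : ∑ t, ((l t : ℕ))
      = (Finset.univ.val.map fun t : Fin (n - 1) => ((l t : ℕ))).sum := rfl
  rw [h2, h3, hms]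

lemma numClasses_le {m k n : ℕ} (hn : 0 < n) (l : Fin (n - 1) → Fin (k + 1)) :
    numClasses m k n (fun t => (l t : ℕ)) ≤ (Efin n k l).card := by
  classical
  set S : Set (Set (Fin n → Fin k → Fin m)) := {C |
    ∃ J : Fin n → Fin k → Fin m, C = orbitV ([] : List (Fin m)) J ∧
      ∀ a : ℕ, joinMult J a
        = (Finset.univ.filter fun t : Fin (n - 1) => (l t : ℕ) = a).card} with hSdef
  have key : ∀ C : S, ∃ x : {x // x ∈ Efin n k l},
      ∃ J : Fin n → Fin k → Fin m, (C : Set _) = orbitV ([] : List (Fin m)) J ∧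
        x.val = (rhoJ J, encA J) := by
    rintro ⟨C, hC⟩
    obtain ⟨J, hCJ, hJ⟩ := hC
    exact ⟨⟨(rhoJ J, encA J), enc_mem hn J l hJ⟩, J, hCJ, rfl⟩
  choose F Jc hJc hFx using key
  have hFinj : Function.Injective F := by
    intro C₁ C₂ heq
    have h1 : (rhoJ (Jc C₁), encA (Jc C₁)) = (rhoJ (Jc C₂), encA (Jc C₂)) := by
      rw [← hFx C₁, ← hFx C₂, heq]
    have hρ : rhoJ (Jc C₁) = rhoJ (Jc C₂) := congrArg Prod.fst h1
    have ha : ∀ s, aJ (Jc C₁) s = aJ (Jc C₂) s := by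
      intro s
      have := congrFun (congrArg Prod.snd h1) s
      exact congrArg Fin.val this
    have hM := recon ha (fun s => congrFun hρ s)
    have horb : orbitV ([] : List (Fin m)) (Jc C₂) = orbitV ([] : List (Fin m)) (Jc C₁) :=
      orbit_eq hM
    apply Subtype.ext
    rw [hJc C₁, hJc C₂, horb]
  calc numClasses m k n (fun t => (l t : ℕ)) = Nat.card S := (Nat.card_coe_set_eq S).symm
    _ ≤ Nat.card {x // x ∈ Efin n k l} := Nat.card_le_card_of_injective F hFinj
    _ = (Efin n k l).card := by rw [Nat.card_eq_fintype_card, Fintype.card_coe]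

lemma mono_eq {N K : ℕ} {l l' : Fin N → Fin (K + 1)}
    (hl : ∀ a b : Fin N, a ≤ b → l a ≤ l b) (hl' : ∀ a b : Fin N, a ≤ b → l' a ≤ l' b)
    (h : Finset.univ.val.map (fun t => ((l t : ℕ)))
      = Finset.univ.val.map (fun t => ((l' t : ℕ)))) :
    l = l' := by
  have huniv : (Finset.univ : Finset (Fin N)).val = (List.finRange N : Multiset (Fin N)) := by
    rw [Fin.univ_def]
  rw [huniv, Multiset.map_coe, Multiset.map_coe, Multiset.coe_eq_coe,
    ← List.ofFn_eq_map, ← List.ofFn_eq_map] at h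
  have hs1 : (List.ofFn (fun t => ((l t : ℕ)))).Pairwise (· ≤ ·) :=
    List.pairwise_ofFn.mpr (fun a b hab => Fin.le_def.mp (hl a b hab.le))
  have hs2 : (List.ofFn (fun t => ((l' t : ℕ)))).Pairwise (· ≤ ·) :=
    List.pairwise_ofFn.mpr (fun a b hab => Fin.le_def.mp (hl' a b hab.le))
  have heq := h.eq_of_pairwise' hs1 hs2
  have heq2 := List.ofFn_inj.mp heq
  funext t
  exact Fin.ext (congrFun heq2 t)

lemma prod_max_eq_factorial : ∀ n : ℕ, 0 < n →
    (∏ s : Fin n, max (s : ℕ) 1) = Nat.factorial (n - 1) := by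
  intro n
  induction n with
  | zero => intro h; omega
  | succ n ih =>
    intro _
    rcases Nat.eq_zero_or_pos n with h0 | h0
    · subst h0
      simp [Nat.factorial]
    · rw [Fin.prod_univ_castSucc]
      have : (∏ i : Fin n, max ((Fin.castSucc i : Fin (n+1)) : ℕ) 1)
          = ∏ i : Fin n, max (i : ℕ) 1 := by
        apply Finset.prod_congr rfl
        intro i _
        rw [Fin.coe_castSucc]
      rw [this, ih h0]
      simp only [Fin.val_last]
      rw [max_eq_left h0]
      have h2 : n + 1 - 1 = n := by omega
      rw [h2]
      rw [← Nat.mul_factorial_pred h0.ne', mul_comm]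

open Classical in
lemma card_rho_le {n : ℕ} (hn : 0 < n) :
    (Finset.univ.filter fun ρ : Fin n → Fin n =>
      ∀ s : Fin n, ((s:ℕ) = 0 → ρ s = s) ∧ (0 < (s:ℕ) → (ρ s : ℕ) < (s:ℕ))).card
      ≤ Nat.factorial (n - 1) := by
  have hmax : ∀ s : Fin n, 0 < max (s:ℕ) 1 := fun s => lt_of_lt_of_le Nat.zero_lt_one
    (le_max_right _ _)
  have h1 : (Finset.univ.filter fun ρ : Fin n → Fin n =>
      ∀ s : Fin n, ((s:ℕ) = 0 → ρ s = s) ∧ (0 < (s:ℕ) → (ρ s : ℕ) < (s:ℕ))).card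
      ≤ (Finset.univ : Finset (∀ s : Fin n, Fin (max (s:ℕ) 1))).card := by
    apply Finset.card_le_card_of_injOn
      (fun (ρ : Fin n → Fin n) => fun (s : Fin n) =>
        if h : (ρ s : ℕ) < max (s:ℕ) 1 then (⟨(ρ s : ℕ), h⟩ : Fin (max (s:ℕ) 1))
        else (⟨0, hmax s⟩ : Fin (max (s:ℕ) 1)))
      (fun ρ _ => Finset.mem_univ _)
    intro ρ hρ ρ' hρ' heq
    simp only [Finset.coe_filter, Set.mem_setOf_eq, Finset.mem_univ, true_and] at hρ hρ'
    have hcond : ∀ (τ : Fin n → Fin n), (∀ s : Fin n, ((s:ℕ) = 0 → τ s = s)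
        ∧ (0 < (s:ℕ) → (τ s : ℕ) < (s:ℕ))) → ∀ s : Fin n, (τ s : ℕ) < max (s:ℕ) 1 := by
      intro τ hτ s
      rcases Nat.eq_zero_or_pos (s:ℕ) with h0 | h0
      · rw [(hτ s).1 h0, h0]
        omega
      · exact lt_of_lt_of_le ((hτ s).2 h0) (le_max_left _ _)
    funext s
    have := congrFun heq s
    simp only [dif_pos (hcond ρ hρ s), dif_pos (hcond ρ' hρ' s)] at this
    exact Fin.ext (congrArg (@Fin.val (max (s:ℕ) 1)) this)
  calc _ ≤ (Finset.univ : Finset (∀ s : Fin n, Fin (max (s:ℕ) 1))).card := h1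
    _ = Nat.factorial (n - 1) := by
      rw [Finset.card_univ, Fintype.card_pi]
      rw [← prod_max_eq_factorial n hn]
      apply Finset.prod_congr rfl
      intro s _
      rw [Fintype.card_fin]

lemma fiber_card_le {n k : ℕ} (hn : 0 < n) (r : ℕ) :
    ((Finset.univ.filter fun a : Fin n → Fin (k+1) =>
        ∀ s : Fin n, (s:ℕ) = 0 → (a s : ℕ) = 0).filter
      fun a => (∑ s, ((a s : ℕ))) = r).card ≤ (r + 1) ^ (n - 2) := by
  classical
  rcases Nat.lt_or_ge n 2 with h2 | h2
  · have hn1 : n = 1 := by omega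
    subst hn1
    have hone : ((Finset.univ.filter fun a : Fin 1 → Fin (k+1) =>
        ∀ s : Fin 1, (s:ℕ) = 0 → (a s : ℕ) = 0).filter
      fun a => (∑ s, ((a s : ℕ))) = r).card ≤ 1 := by
      rw [Finset.card_le_one]
      intro a ha b hb
      simp only [Finset.mem_filter, Finset.mem_univ, true_and] at ha hb
      funext s
      apply Fin.ext
      rw [ha.1 s (by omega), hb.1 s (by omega)]
    simpa using hone
  · have h1 : ((Finset.univ.filter fun a : Fin n → Fin (k+1) =>
        ∀ s : Fin n, (s:ℕ) = 0 → (a s : ℕ) = 0).filter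
      fun a => (∑ s, ((a s : ℕ))) = r).card
        ≤ (Finset.univ : Finset (Fin (n-2) → Fin (r+1))).card := by
      apply Finset.card_le_card_of_injOn
        (fun a => fun i : Fin (n-2) => if h : (a ⟨(i:ℕ)+1, by omega⟩ : ℕ) < r + 1
          then ⟨(a ⟨(i:ℕ)+1, by omega⟩ : ℕ), h⟩ else ⟨0, by omega⟩)
        (fun a _ => Finset.mem_univ _)
      intro a ha a' ha' heq
      simp only [Finset.coe_filter, Set.mem_setOf_eq, Finset.mem_filter, Finset.mem_univ,
        true_and] at ha ha'
      have hbd : ∀ (b : Fin n → Fin (k+1)), (∑ s, ((b s : ℕ))) = r →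
          ∀ s : Fin n, (b s : ℕ) < r + 1 := by
        intro b hb s
        have h4 : (b s : ℕ) ≤ ∑ u, ((b u : ℕ)) := Finset.single_le_sum
          (f := fun u => ((b u : ℕ))) (fun u _ => Nat.zero_le _) (Finset.mem_univ s)
        omega
      have hivals : ∀ i : Fin (n-2), (a ⟨(i:ℕ)+1, by omega⟩ : ℕ)
          = (a' ⟨(i:ℕ)+1, by omega⟩ : ℕ) := by
        intro i
        have := congrFun heq i
        simp only [dif_pos (hbd a ha.2 _), dif_pos (hbd a' ha'.2 _)] at this
        exact congrArg (@Fin.val (r+1)) this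
      have hall : ∀ u : Fin n, (u:ℕ) < n - 1 → a u = a' u := by
        intro u hu
        rcases Nat.eq_zero_or_pos (u:ℕ) with h0 | h0
        · exact Fin.ext (by rw [ha.1 u h0, ha'.1 u h0])
        · have hi : (u:ℕ) - 1 < n - 2 := by omega
          have hu2 : u = ⟨((⟨(u:ℕ) - 1, hi⟩ : Fin (n-2)):ℕ)+1, by omega⟩ := by
            apply Fin.ext
            simp only [Fin.val_mk]
            omega
          rw [hu2]
          exact Fin.ext (hivals ⟨(u:ℕ) - 1, hi⟩)
      funext u
      rcases Nat.lt_or_ge (u:ℕ) (n-1) with hu | hu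
      · exact hall u hu
      · have hulast : (u:ℕ) = n - 1 := by have := u.isLt; omega
        have e1 : (∑ s ∈ Finset.univ.erase u, ((a s : ℕ))) + (a u : ℕ)
            = ∑ s, ((a s : ℕ)) := Finset.sum_erase_add _ _ (Finset.mem_univ u)
        have e2 : (∑ s ∈ Finset.univ.erase u, ((a' s : ℕ))) + (a' u : ℕ)
            = ∑ s, ((a' s : ℕ)) := Finset.sum_erase_add _ _ (Finset.mem_univ u)
        have he : ∑ s ∈ Finset.univ.erase u, ((a s : ℕ))
            = ∑ s ∈ Finset.univ.erase u, ((a' s : ℕ)) := by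
          apply Finset.sum_congr rfl
          intro s hs
          have hsne : s ≠ u := (Finset.mem_erase.mp hs).1
          have hsu : (s:ℕ) < n - 1 := by
            have h3 : (s:ℕ) ≠ n - 1 := by
              intro hc
              exact hsne (Fin.ext (by omega))
            have := s.isLt
            omega
          rw [hall s hsu]
        apply Fin.ext
        rw [ha.2] at e1
        rw [ha'.2] at e2
        omega
    calc _ ≤ (Finset.univ : Finset (Fin (n-2) → Fin (r+1))).card := h1
      _ = (r + 1) ^ (n - 2) := by
        rw [Finset.card_univ, Fintype.card_pi]
        simp [Finset.prod_const]

lemma summable_aux (n : ℕ) {lam : ℝ} (h0 : 0 < lam) (h1 : lam < 1) :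
    Summable (fun r : ℕ => ((r:ℝ) + 1) ^ (n - 2) * lam ^ r) := by
  have hnorm : ‖lam‖ < 1 := by rw [Real.norm_eq_abs, abs_of_pos h0]; exact h1
  have h := summable_pow_mul_geometric_of_norm_lt_one (n - 2) hnorm
  have h2 : Summable (fun r : ℕ => (((r + 1 : ℕ)):ℝ) ^ (n - 2) * lam ^ (r + 1)) :=
    (summable_nat_add_iff 1).mpr h
  have h3 := h2.mul_left lam⁻¹
  apply h3.congr
  intro r
  have hne : lam ≠ 0 := ne_of_gt h0
  push_cast
  rw [pow_succ]
  field_simp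

open Classical in
lemma sum_a_le {n k : ℕ} (hn : 0 < n) {lam : ℝ} (hlam0 : 0 < lam) (hlam1 : lam < 1) :
    ∑ a ∈ (Finset.univ.filter fun a : Fin n → Fin (k+1) =>
        ∀ s : Fin n, (s:ℕ) = 0 → (a s : ℕ) = 0),
      lam ^ (∑ s, ((a s : ℕ)))
    ≤ ∑' r : ℕ, ((r:ℝ) + 1) ^ (n - 2) * lam ^ r := by
  set Fa := Finset.univ.filter fun a : Fin n → Fin (k+1) =>
        ∀ s : Fin n, (s:ℕ) = 0 → (a s : ℕ) = 0 with hFa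
  have hmap : ∀ a ∈ Fa, (∑ s, ((a s : ℕ))) ∈ Finset.range (n*k+1) := by
    intro a _
    rw [Finset.mem_range]
    have h1 : (∑ s, ((a s : ℕ))) ≤ ∑ _s : Fin n, k :=
      Finset.sum_le_sum (fun s _ => Nat.lt_succ_iff.mp (a s).isLt)
    have h2 : (∑ _s : Fin n, k) = n * k := by
      rw [Finset.sum_const, Finset.card_univ, Fintype.card_fin, smul_eq_mul]
    omega
  rw [← Finset.sum_fiberwise_of_maps_to hmap (fun a => lam ^ (∑ s, ((a s : ℕ))))]
  have hinner : ∀ r ∈ Finset.range (n*k+1),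
      (∑ a ∈ Fa.filter (fun a => (∑ s, ((a s : ℕ))) = r), lam ^ (∑ s, ((a s : ℕ))))
      ≤ ((r:ℝ)+1)^(n-2) * lam ^ r := by
    intro r _
    have h1 : (∑ a ∈ Fa.filter (fun a => (∑ s, ((a s : ℕ))) = r), lam ^ (∑ s, ((a s : ℕ))))
        = ((Fa.filter (fun a => (∑ s, ((a s : ℕ))) = r)).card : ℝ) * lam ^ r := by
      rw [Finset.sum_congr rfl (fun a ha => by rw [(Finset.mem_filter.mp ha).2]),
        Finset.sum_const, nsmul_eq_mul]
    rw [h1]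
    apply mul_le_mul_of_nonneg_right _ (le_of_lt (pow_pos hlam0 r))
    have hfc := fiber_card_le (k := k) hn r
    calc ((Fa.filter (fun a => (∑ s, ((a s : ℕ))) = r)).card : ℝ)
        ≤ (((r+1)^(n-2) : ℕ) : ℝ) := by norm_cast
      _ = ((r:ℝ)+1)^(n-2) := by push_cast; ring
  calc _ ≤ ∑ r ∈ Finset.range (n*k+1), ((r:ℝ)+1)^(n-2) * lam ^ r := Finset.sum_le_sum hinner
    _ ≤ ∑' r : ℕ, ((r:ℝ)+1)^(n-2) * lam ^ r := by
      apply Summable.sum_le_tsum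
      · intro r _
        positivity
      · exact summable_aux n hlam0 hlam1

/-- `∑_{0 ≤ l₁ ≤ ⋯ ≤ l_{n−1} ≤ k} N(l₁,…,l_{n−1}) λ^{l₁+⋯+l_{n−1}}
≤ (n−1)! ∑_{r=0}^∞ (r+1)^{n−2} λ^r`, a bound independent of `k`. -/
theorem stmt_13 {m : ℕ} (hm : 2 ≤ m) (n : ℕ) (hn : 1 ≤ n)
    (lam : ℝ) (hlam0 : 0 < lam) (hlam1 : lam < 1) (k : ℕ) :
    ∑ l ∈ Finset.univ.filter (fun l : Fin (n - 1) → Fin (k + 1) =>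
        ∀ a b : Fin (n - 1), a ≤ b → l a ≤ l b),
      (numClasses m k n (fun t => (l t : ℕ)) : ℝ) * lam ^ (∑ t, (l t : ℕ))
    ≤ (Nat.factorial (n - 1) : ℝ) * ∑' r : ℕ, ((r : ℝ) + 1) ^ (n - 2) * lam ^ r := by
  classical
  have hnn : 0 < n := hn
  set S := Finset.univ.filter (fun l : Fin (n - 1) → Fin (k + 1) =>
      ∀ a b : Fin (n - 1), a ≤ b → l a ≤ l b) with hS
  set Fρ := Finset.univ.filter (fun ρ : Fin n → Fin n =>
    ∀ s : Fin n, ((s:ℕ) = 0 → ρ s = s) ∧ (0 < (s:ℕ) → (ρ s : ℕ) < (s:ℕ))) with hFρ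
  set Fa := Finset.univ.filter (fun a : Fin n → Fin (k+1) =>
    ∀ s : Fin n, (s:ℕ) = 0 → (a s : ℕ) = 0) with hFa
  set F := Finset.univ.filter (fun x : (Fin n → Fin n) × (Fin n → Fin (k+1)) =>
    (∀ s : Fin n, ((s:ℕ) = 0 → x.1 s = s) ∧ (0 < (s:ℕ) → (x.1 s : ℕ) < (s:ℕ)))
    ∧ (∀ s : Fin n, (s:ℕ) = 0 → (x.2 s : ℕ) = 0)) with hF
  have step1 : ∀ l ∈ S, (numClasses m k n (fun t => (l t : ℕ)) : ℝ) * lam ^ (∑ t, (l t : ℕ))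
      ≤ ∑ x ∈ Efin n k l, lam ^ (∑ s, ((x.2 s : ℕ))) := by
    intro l _
    have hx : ∀ x ∈ Efin n k l, lam ^ (∑ s, ((x.2 s : ℕ))) = lam ^ (∑ t, ((l t : ℕ))) :=
      fun x hx => by rw [sum_eq_of_mem_Efin hx]
    rw [Finset.sum_congr rfl hx, Finset.sum_const, nsmul_eq_mul]
    apply mul_le_mul_of_nonneg_right _ (le_of_lt (pow_pos hlam0 _))
    exact_mod_cast numClasses_le hnn l
  have hdisj : (↑S : Set (Fin (n-1) → Fin (k+1))).PairwiseDisjoint (Efin n k) := by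
    intro l hl l' hl' hne
    simp only [hS, Finset.coe_filter, Set.mem_setOf_eq, Finset.mem_univ, true_and] at hl hl'
    apply Finset.disjoint_left.mpr
    intro x hx hx'
    apply hne
    apply mono_eq hl hl'
    simp only [Efin, Finset.mem_filter] at hx hx'
    rw [← hx.2.2.2, ← hx'.2.2.2]
  have step2 : ∑ l ∈ S, ∑ x ∈ Efin n k l, lam ^ (∑ s, ((x.2 s : ℕ)))
      = ∑ x ∈ S.biUnion (Efin n k), lam ^ (∑ s, ((x.2 s : ℕ))) :=
    (Finset.sum_biUnion hdisj).symm
  have step3 : ∑ x ∈ S.biUnion (Efin n k), lam ^ (∑ s, ((x.2 s : ℕ)))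
      ≤ ∑ x ∈ F, lam ^ (∑ s, ((x.2 s : ℕ))) := by
    apply Finset.sum_le_sum_of_subset_of_nonneg
    · intro x hx
      rw [Finset.mem_biUnion] at hx
      obtain ⟨l, -, hx⟩ := hx
      simp only [Efin, Finset.mem_filter, Finset.mem_univ, true_and] at hx
      simp only [hF, Finset.mem_filter, Finset.mem_univ, true_and]
      exact ⟨hx.1, hx.2.1⟩
    · intro x _ _
      positivity
  have hFeq : F = Fρ ×ˢ Fa := by
    ext x
    simp only [hF, hFρ, hFa, Finset.mem_filter, Finset.mem_univ, true_and,
      Finset.mem_product]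
  have step4 : ∑ x ∈ F, lam ^ (∑ s, ((x.2 s : ℕ)))
      = (Fρ.card : ℝ) * ∑ a ∈ Fa, lam ^ (∑ s, ((a s : ℕ))) := by
    rw [hFeq, Finset.sum_product]
    have hconst : ∀ x ∈ Fρ, (∑ y ∈ Fa, lam ^ (∑ s : Fin n, (((x, y).2 s : ℕ))))
        = ∑ a ∈ Fa, lam ^ (∑ s, ((a s : ℕ))) := fun x _ => rfl
    rw [Finset.sum_congr rfl hconst, Finset.sum_const, nsmul_eq_mul]
  have step5 : (Fρ.card : ℝ) * (∑ a ∈ Fa, lam ^ (∑ s, ((a s : ℕ))))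
      ≤ (Nat.factorial (n-1) : ℝ) * ∑' r : ℕ, ((r:ℝ) + 1) ^ (n - 2) * lam ^ r := by
    apply mul_le_mul
    · exact_mod_cast card_rho_le hnn
    · exact sum_a_le hnn hlam0 hlam1
    · apply Finset.sum_nonneg
      intro a _
      positivity
    · positivity
  calc ∑ l ∈ S, (numClasses m k n (fun t => (l t : ℕ)) : ℝ) * lam ^ (∑ t, (l t : ℕ))
      ≤ ∑ l ∈ S, ∑ x ∈ Efin n k l, lam ^ (∑ s, ((x.2 s : ℕ))) := Finset.sum_le_sum step1
    _ = ∑ x ∈ S.biUnion (Efin n k), lam ^ (∑ s, ((x.2 s : ℕ))) := step2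
    _ ≤ ∑ x ∈ F, lam ^ (∑ s, ((x.2 s : ℕ))) := step3
    _ = (Fρ.card : ℝ) * ∑ a ∈ Fa, lam ^ (∑ s, ((a s : ℕ))) := step4
    _ ≤ _ := step5
end
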